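/- With notation as in the context: suppose A : G → GL_{N+1}(L) is a family of matrices with φ^σ ≈ φ^{A(σ)} for every σ ∈ G. Then the following are equivalent: (i) there exist a matrix B ∈ GL_{N+1}(L) and a tuple ψ = (ψ_0, …, ψ_N) of polynomials in K[X_0, …, X_N], each homogeneous of degree d, such that φ^B ≈ ψ_L, where ψ_L is the system over L obtained by mapping the coefficients of ψ along the inclusion K → L; (ii) there exists g ∈ GL_{N+1}(L) such that for every σ ∈ G, φ^{(g⁻¹ · σ(g)) · A(σ)⁻¹} ≈ φ. (That is, K is a field of definition for the class of φ if and only if the cocycle σ ↦ A(σ) is a coboundary relative to the stabilizer 𝒜_φ.) -/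

import Mathlib

/-- The conjugate system `φ^A`: its `i`-th entry is
`∑ⱼ (A⁻¹)ᵢⱼ · φⱼ(A·X)`, where `φⱼ(A·X)` substitutes `Xₖ ↦ ∑ₗ Aₖₗ·Xₗ`. -/
noncomputable def conjSys {L : Type*} [Field L] {n : ℕ}
    (A : Matrix.GeneralLinearGroup (Fin n) L)
    (φ : Fin n → MvPolynomial (Fin n) L) : Fin n → MvPolynomial (Fin n) L :=
  fun i => ∑ j, MvPolynomial.C ((↑(A⁻¹) : Matrix (Fin n) (Fin n) L) i j) *
    MvPolynomial.aeval
      (fun k => ∑ l, MvPolynomial.C ((↑A : Matrix (Fin n) (Fin n) L) k l) * MvPolynomial.X l)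
      (φ j)

/-- Projective equality of systems: `ψ = c·φ` for some nonzero scalar `c`. -/
def projEq {L : Type*} [Field L] {n : ℕ}
    (φ ψ : Fin n → MvPolynomial (Fin n) L) : Prop :=
  ∃ c : L, c ≠ 0 ∧ ∀ i, ψ i = MvPolynomial.C c * φ i

/-- The system `φ^σ` obtained by applying `σ` to every coefficient. -/
noncomputable def mapSys {L : Type*} [Field L] {n : ℕ} (σ : L →+* L)
    (φ : Fin n → MvPolynomial (Fin n) L) : Fin n → MvPolynomial (Fin n) L :=
  fun i => MvPolynomial.map σ (φ i)

/-- The matrix `σ(A)` obtained by applying `σ` to every entry of `A`. -/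
noncomputable def galGL {L : Type*} [Field L] {n : ℕ} (σ : L →+* L)
    (A : Matrix.GeneralLinearGroup (Fin n) L) : Matrix.GeneralLinearGroup (Fin n) L :=
  Units.map σ.mapMatrix.toMonoidHom A

namespace Fod

open MvPolynomial

variable {L : Type*} [Field L] {n : ℕ}

/- linear substitution -/
noncomputable def lin (M : Matrix (Fin n) (Fin n) L) : Fin n → MvPolynomial (Fin n) L :=
  fun k => ∑ l, C (M k l) * X l

lemma conjSys_def (A : Matrix.GeneralLinearGroup (Fin n) L)
    (φ : Fin n → MvPolynomial (Fin n) L) (i : Fin n) :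
    conjSys A φ i = ∑ j, C ((↑(A⁻¹) : Matrix (Fin n) (Fin n) L) i j) *
      aeval (lin (↑A : Matrix (Fin n) (Fin n) L)) (φ j) := rfl

lemma aeval_aeval (f g : Fin n → MvPolynomial (Fin n) L) (p : MvPolynomial (Fin n) L) :
    aeval f (aeval g p) = aeval (fun i => aeval f (g i)) p := by
  rw [← comp_aeval_apply]

lemma aeval_lin_lin (M M' : Matrix (Fin n) (Fin n) L) (k : Fin n) :
    aeval (lin M) (lin M' k) = lin (M' * M) k := by
  simp only [lin, map_sum, map_mul, aeval_C, aeval_X, algebraMap_eq, Matrix.mul_apply,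
    Finset.mul_sum, Finset.sum_mul]
  rw [Finset.sum_comm]
  simp [mul_assoc]

lemma aeval_lin_lin' (M M' : Matrix (Fin n) (Fin n) L) (p : MvPolynomial (Fin n) L) :
    aeval (lin M) (aeval (lin M') p) = aeval (lin (M' * M)) p := by
  rw [aeval_aeval]
  have h : (fun i => aeval (lin M) (lin M' i)) = lin (M' * M) := funext (aeval_lin_lin M M')
  rw [h]

lemma conjSys_conjSys (A B : Matrix.GeneralLinearGroup (Fin n) L)
    (φ : Fin n → MvPolynomial (Fin n) L) :
    conjSys B (conjSys A φ) = conjSys (A * B) φ := by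
  funext i
  simp only [conjSys_def, map_sum, map_mul, aeval_C, algebraMap_eq, aeval_lin_lin',
    Finset.mul_sum]
  rw [Finset.sum_comm]
  have hval : ((↑((A * B)⁻¹) : Matrix (Fin n) (Fin n) L)) =
      (↑(B⁻¹) : Matrix (Fin n) (Fin n) L) * (↑(A⁻¹) : Matrix (Fin n) (Fin n) L) := by
    rw [mul_inv_rev, Units.val_mul]
  have hAB : (↑(A * B) : Matrix (Fin n) (Fin n) L) =
      (↑A : Matrix (Fin n) (Fin n) L) * (↑B : Matrix (Fin n) (Fin n) L) := Units.val_mul _ _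
  rw [hval, hAB]
  simp [Matrix.mul_apply, Finset.sum_mul, mul_assoc]

lemma conjSys_one (φ : Fin n → MvPolynomial (Fin n) L) : conjSys 1 φ = φ := by
  funext i
  have hlin : lin ((↑(1 : Matrix.GeneralLinearGroup (Fin n) L)) : Matrix (Fin n) (Fin n) L)
      = X := by
    funext k
    simp [lin, Matrix.one_apply, Finset.sum_ite_eq, ite_mul]
  rw [conjSys_def, hlin]
  simp only [aeval_X_left_apply, inv_one, Units.val_one, Matrix.one_apply]
  simp [ite_mul]

lemma projEq_refl (φ : Fin n → MvPolynomial (Fin n) L) : projEq φ φ :=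
  ⟨1, one_ne_zero, fun i => by simp⟩

lemma projEq_symm {φ ψ : Fin n → MvPolynomial (Fin n) L} (h : projEq φ ψ) : projEq ψ φ := by
  obtain ⟨c, hc, h⟩ := h
  exact ⟨c⁻¹, inv_ne_zero hc, fun i => by
    rw [h i, ← mul_assoc, ← C_mul, inv_mul_cancel₀ hc, C_1, one_mul]⟩

lemma projEq_trans {φ ψ χ : Fin n → MvPolynomial (Fin n) L}
    (h1 : projEq φ ψ) (h2 : projEq ψ χ) : projEq φ χ := by
  obtain ⟨c, hc, h1⟩ := h1
  obtain ⟨c', hc', h2⟩ := h2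
  exact ⟨c' * c, mul_ne_zero hc' hc, fun i => by rw [h2 i, h1 i, ← mul_assoc, ← C_mul]⟩

lemma conjSys_C_mul (A : Matrix.GeneralLinearGroup (Fin n) L)
    (φ : Fin n → MvPolynomial (Fin n) L) (c : L) :
    conjSys A (fun i => C c * φ i) = fun i => C c * conjSys A φ i := by
  funext i
  simp [conjSys_def, Finset.mul_sum, algebraMap_eq]
  congr 1
  funext j
  ring

lemma projEq_conjSys (A : Matrix.GeneralLinearGroup (Fin n) L)
    {φ ψ : Fin n → MvPolynomial (Fin n) L} (h : projEq φ ψ) :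
    projEq (conjSys A φ) (conjSys A ψ) := by
  obtain ⟨c, hc, h⟩ := h
  refine ⟨c, hc, fun i => ?_⟩
  have hψ : ψ = fun j => C c * φ j := funext h
  rw [hψ, conjSys_C_mul]

lemma projEq_conjSys_inv (M : Matrix.GeneralLinearGroup (Fin n) L)
    {φ : Fin n → MvPolynomial (Fin n) L} (h : projEq (conjSys M φ) φ) :
    projEq (conjSys M⁻¹ φ) φ := by
  have h2 := projEq_conjSys M⁻¹ h
  rw [conjSys_conjSys, mul_inv_cancel, conjSys_one] at h2
  exact projEq_symm h2

lemma map_aeval' (σ : L →+* L) (f : Fin n → MvPolynomial (Fin n) L) (p : MvPolynomial (Fin n) L) :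
    MvPolynomial.map σ (aeval f p) =
      aeval (fun i => MvPolynomial.map σ (f i)) (MvPolynomial.map σ p) := by
  induction p using MvPolynomial.induction_on with
  | C a => simp [aeval_C, algebraMap_eq]
  | add p q hp hq => simp only [map_add, hp, hq]
  | mul_X p i hp =>
      simp only [map_mul, aeval_X, MvPolynomial.map_X]
      rw [hp]

lemma map_lin (σ : L →+* L) (M : Matrix (Fin n) (Fin n) L) (k : Fin n) :
    MvPolynomial.map σ (lin M k) = lin (M.map σ) k := by
  simp [lin, Matrix.map_apply]

lemma galGL_coe (σ : L →+* L) (A : Matrix.GeneralLinearGroup (Fin n) L) :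
    (↑(galGL σ A) : Matrix (Fin n) (Fin n) L) = (↑A : Matrix (Fin n) (Fin n) L).map σ := rfl

lemma galGL_inv (σ : L →+* L) (A : Matrix.GeneralLinearGroup (Fin n) L) :
    galGL σ A⁻¹ = (galGL σ A)⁻¹ := by
  unfold galGL
  exact map_inv _ A

lemma mapSys_conjSys (σ : L →+* L) (A : Matrix.GeneralLinearGroup (Fin n) L)
    (φ : Fin n → MvPolynomial (Fin n) L) :
    mapSys σ (conjSys A φ) = conjSys (galGL σ A) (mapSys σ φ) := by
  funext i
  simp only [mapSys, conjSys_def, map_sum, map_mul, MvPolynomial.map_C, map_aeval']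
  have h1 : (↑((galGL σ A)⁻¹) : Matrix (Fin n) (Fin n) L)
      = (↑(A⁻¹) : Matrix (Fin n) (Fin n) L).map σ := by
    rw [← galGL_inv, galGL_coe]
  have h2 : (fun k => MvPolynomial.map σ (lin (↑A : Matrix (Fin n) (Fin n) L) k))
      = lin (↑(galGL σ A) : Matrix (Fin n) (Fin n) L) := by
    funext k
    rw [map_lin, galGL_coe]
  rw [h1, h2]
  simp [Matrix.map_apply]

lemma projEq_mapSys (σ : L →+* L) {φ ψ : Fin n → MvPolynomial (Fin n) L} (h : projEq φ ψ) :
    projEq (mapSys σ φ) (mapSys σ ψ) := by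
  obtain ⟨c, hc, h⟩ := h
  refine ⟨σ c, fun h0 => hc (σ.injective (by rw [h0, map_zero])), fun i => ?_⟩
  rw [mapSys, h i, map_mul, MvPolynomial.map_C]
  rfl

lemma conjSys_isHomogeneous (A : Matrix.GeneralLinearGroup (Fin n) L)
    {φ : Fin n → MvPolynomial (Fin n) L} {d : ℕ}
    (h : ∀ i, (φ i).IsHomogeneous d) (i : Fin n) :
    (conjSys A φ i).IsHomogeneous d := by
  rw [conjSys_def]
  apply IsHomogeneous.sum
  intro j _
  have hlin : ∀ k, ((lin (↑A : Matrix (Fin n) (Fin n) L)) k).IsHomogeneous 1 := by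
    intro k
    apply IsHomogeneous.sum
    intro l _
    exact isHomogeneous_C_mul_X _ _
  have := ((h j).aeval _ hlin)
  rw [one_mul] at this
  exact this.C_mul _

lemma conjSys_zero (A : Matrix.GeneralLinearGroup (Fin n) L)
    {φ : Fin n → MvPolynomial (Fin n) L} (h : ∀ i, φ i = 0) (i : Fin n) :
    conjSys A φ i = 0 := by
  simp [conjSys_def, h]

lemma exists_preimage {K : Type*} [Field K] [Algebra K L]
    (p : MvPolynomial (Fin n) L) (h : ∀ m, ∃ k : K, algebraMap K L k = coeff m p) :
    ∃ q : MvPolynomial (Fin n) K, MvPolynomial.map (algebraMap K L) q = p := by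
  choose f hf using h
  refine ⟨∑ m ∈ p.support, monomial m (f m), ?_⟩
  rw [map_sum]
  have : ∀ m ∈ p.support, MvPolynomial.map (algebraMap K L) (monomial m (f m))
      = monomial m (coeff m p) := by
    intro m _
    rw [MvPolynomial.map_monomial, hf m]
  rw [Finset.sum_congr rfl this]
  exact p.support_sum_monomial_coeff

lemma isHomogeneous_of_map {K : Type*} [Field K] (f : K →+* L)
    {p : MvPolynomial (Fin n) K} {d : ℕ}
    (h : (MvPolynomial.map f p).IsHomogeneous d) : p.IsHomogeneous d := by
  intro m hm
  apply h
  rw [MvPolynomial.coeff_map]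
  intro h0
  exact hm (f.injective (by rw [h0, map_zero]))

end Fod

open MvPolynomial

lemma fixed_mem_range {K L : Type*} [Field K] [Field L] [Algebra K L] [IsSepClosure K L]
    (x : L) (hx : ∀ σ : L ≃ₐ[K] L, σ x = x) : ∃ k : K, algebraMap K L k = x := by
  classical
  have halg : IsAlgebraic K x := Algebra.IsAlgebraic.isAlgebraic x
  have hint : IsIntegral K x := halg.isIntegral
  have hsep : (minpoly K x).Separable := Algebra.IsSeparable.isSeparable K x
  have hsplit : Polynomial.Splits ((minpoly K x).map (algebraMap K L)) := Normal.splits inferInstance x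
  have hmem : x ∈ (algebraMap K L).range := by
    rw [← minpoly.natDegree_eq_one_iff]
    have hcard := by have h := hsplit.natDegree_eq_card_roots; rwa [Polynomial.natDegree_map] at h
    set q := (minpoly K x).map (algebraMap K L) with hq
    have hall : ∀ y ∈ q.roots, y = x := by
      intro y hy
      have h_ev : Polynomial.aeval y (minpoly K x) = 0 := by
        have h1 := Polynomial.isRoot_of_mem_roots hy
        rwa [Polynomial.aeval_def, ← Polynomial.eval_map]
      obtain ⟨σ, hσ⟩ := minpoly.exists_algEquiv_of_root halg h_ev
      have : y = σ.symm x := by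
        rw [← hσ]; simp
      rw [this, hx σ.symm]
    have hnodup : q.roots.Nodup := Polynomial.nodup_roots (hsep.map)
    have hrep : q.roots = Multiset.replicate (Multiset.card q.roots) x :=
      Multiset.eq_replicate_card.mpr hall
    have hle : Multiset.card q.roots ≤ 1 := by
      have h1 := Multiset.nodup_iff_count_le_one.mp hnodup x
      rw [hrep, Multiset.count_replicate_self] at h1
      exact h1
    have hpos := minpoly.natDegree_pos hint
    omega
  exact hmem

theorem field_of_definition_iff_coboundary
    {K L : Type*} [Field K] [Field L] [Algebra K L] [IsSepClosure K L]
    (N d : ℕ) (hN : 1 ≤ N) (hd : 1 ≤ d)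
    (φ : Fin (N + 1) → MvPolynomial (Fin (N + 1)) L)
    (hhom : ∀ i, (φ i).IsHomogeneous d) (hne : ∃ i, φ i ≠ 0)
    (A : (L ≃ₐ[K] L) → Matrix.GeneralLinearGroup (Fin (N + 1)) L)
    (hA : ∀ σ : L ≃ₐ[K] L, projEq (conjSys (A σ) φ) (mapSys (σ : L →+* L) φ)) :
    (∃ (B : Matrix.GeneralLinearGroup (Fin (N + 1)) L)
        (ψ : Fin (N + 1) → MvPolynomial (Fin (N + 1)) K),
      (∀ i, (ψ i).IsHomogeneous d) ∧
      projEq (conjSys B φ) (fun i => MvPolynomial.map (algebraMap K L) (ψ i))) ↔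
    (∃ g : Matrix.GeneralLinearGroup (Fin (N + 1)) L, ∀ σ : L ≃ₐ[K] L,
      projEq (conjSys ((g⁻¹ * galGL (σ : L →+* L) g) * (A σ)⁻¹) φ) φ) := by
  open Fod in
  constructor
  · rintro ⟨B, ψ, hψhom, hBψ⟩
    refine ⟨B⁻¹, fun σ => ?_⟩
    set ψL : Fin (N+1) → MvPolynomial (Fin (N+1)) L :=
      fun i => MvPolynomial.map (algebraMap K L) (ψ i) with hψL
    have hfix : mapSys (σ : L →+* L) ψL = ψL := by
      funext i
      simp only [mapSys, hψL, MvPolynomial.map_map]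
      have hcomp : (σ : L →+* L).comp (algebraMap K L) = algebraMap K L :=
        RingHom.ext fun k => σ.commutes k
      rw [hcomp]
    have h2 : projEq (conjSys (galGL (σ : L →+* L) B) (mapSys (σ : L →+* L) φ)) ψL := by
      have h := Fod.projEq_mapSys (σ : L →+* L) hBψ
      rw [Fod.mapSys_conjSys, hfix] at h
      exact h
    have h3 : projEq (conjSys (A σ * galGL (σ : L →+* L) B) φ) ψL := by
      refine Fod.projEq_trans ?_ h2
      rw [← Fod.conjSys_conjSys]
      exact Fod.projEq_conjSys _ (hA σ)
    have h4 : projEq (conjSys (A σ * galGL (σ : L →+* L) B) φ) (conjSys B φ) :=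
      Fod.projEq_trans h3 (Fod.projEq_symm hBψ)
    have h5 : projEq (conjSys (A σ * galGL (σ : L →+* L) B * B⁻¹) φ) φ := by
      have h := Fod.projEq_conjSys B⁻¹ h4
      rw [Fod.conjSys_conjSys, Fod.conjSys_conjSys, mul_inv_cancel, Fod.conjSys_one] at h
      exact h
    have h6 := Fod.projEq_conjSys_inv _ h5
    have hm : (B⁻¹⁻¹ * galGL (σ : L →+* L) B⁻¹) * (A σ)⁻¹
        = (A σ * galGL (σ : L →+* L) B * B⁻¹)⁻¹ := by
      rw [Fod.galGL_inv]
      group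
    rw [hm]
    exact h6
  · rintro ⟨g, hg⟩
    classical
    set ψ' := conjSys g⁻¹ φ with hψ'
    have hstep : ∀ σ : L ≃ₐ[K] L, projEq (mapSys (σ : L →+* L) ψ') ψ' := by
      intro σ
      have h1 : mapSys (σ : L →+* L) ψ'
          = conjSys ((galGL (σ : L →+* L) g)⁻¹) (mapSys (σ : L →+* L) φ) := by
        rw [hψ', Fod.mapSys_conjSys, Fod.galGL_inv]
      have h2 : projEq (conjSys ((galGL (σ : L →+* L) g)⁻¹) (mapSys (σ : L →+* L) φ))
          (conjSys (A σ * (galGL (σ : L →+* L) g)⁻¹) φ) := by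
        rw [← Fod.conjSys_conjSys]
        exact Fod.projEq_symm (Fod.projEq_conjSys _ (hA σ))
      have h3 := Fod.projEq_conjSys_inv _ (hg σ)
      have h4 := Fod.projEq_conjSys g⁻¹ h3
      rw [Fod.conjSys_conjSys] at h4
      have hm : ((g⁻¹ * galGL (σ : L →+* L) g) * (A σ)⁻¹)⁻¹ * g⁻¹
          = A σ * (galGL (σ : L →+* L) g)⁻¹ := by group
      rw [hm] at h4
      rw [h1]
      exact Fod.projEq_trans h2 h4
    have hψ'ne : ∃ i, ψ' i ≠ 0 := by
      by_contra h
      push_neg at h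
      obtain ⟨i0, hi0⟩ := hne
      apply hi0
      have hφeq : φ = conjSys g ψ' := by
        rw [hψ', Fod.conjSys_conjSys, inv_mul_cancel, Fod.conjSys_one]
      rw [hφeq]
      exact Fod.conjSys_zero g h i0
    obtain ⟨i0, hi0⟩ := hψ'ne
    obtain ⟨m0, hm0⟩ := MvPolynomial.ne_zero_iff.mp hi0
    set a := coeff m0 (ψ' i0) with ha
    set ψ'' : Fin (N+1) → MvPolynomial (Fin (N+1)) L := fun j => C a⁻¹ * ψ' j with hψ''
    have hpe : projEq ψ' ψ'' := ⟨a⁻¹, inv_ne_zero hm0, fun i => rfl⟩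
    have hcoeff : coeff m0 (ψ'' i0) = 1 := by
      simp only [hψ'', coeff_C_mul]
      exact inv_mul_cancel₀ hm0
    have hfix : ∀ σ : L ≃ₐ[K] L, mapSys (σ : L →+* L) ψ'' = ψ'' := by
      intro σ
      have h5 : projEq (mapSys (σ : L →+* L) ψ'') ψ'' :=
        Fod.projEq_trans (Fod.projEq_trans
          (Fod.projEq_mapSys _ (Fod.projEq_symm hpe)) (hstep σ)) hpe
      obtain ⟨c, hc, hceq⟩ := h5
      have h7 : coeff m0 (mapSys (σ : L →+* L) ψ'' i0) = 1 := by
        simp only [mapSys, MvPolynomial.coeff_map, hcoeff, map_one]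
      have h6 : (1 : L) = c := by
        have h9 := congrArg (coeff m0) (hceq i0)
        rwa [hcoeff, coeff_C_mul, h7, mul_one] at h9
      funext i
      rw [hceq i, ← h6, C_1, one_mul]
    have hrange : ∀ j m, ∃ k : K, algebraMap K L k = coeff m (ψ'' j) := by
      intro j m
      apply fixed_mem_range
      intro σ
      have h8 := congrArg (fun p => coeff m (p j)) (hfix σ)
      simpa [mapSys, MvPolynomial.coeff_map] using h8
    choose ψK hψK using fun j => Fod.exists_preimage (ψ'' j) (hrange j)
    refine ⟨g⁻¹, ψK, ?_, ?_⟩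
    · intro i
      apply Fod.isHomogeneous_of_map (algebraMap K L)
      rw [hψK i]
      exact (Fod.conjSys_isHomogeneous g⁻¹ hhom i).C_mul _
    · have hfun : (fun i => MvPolynomial.map (algebraMap K L) (ψK i)) = ψ'' := funext hψK
      rw [hfun]
      exact hpe
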